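/- Let I be a nonempty open real interval, let f,g : I → ℝ be twice differentiable functions on I with nonvanishing first derivatives, and let p = (p₁,p₂) : I → ℝ₊² and q = (q₁,q₂) : I → ℝ₊² be differentiable on I such that p₁/p₀ = q₂/q₀ and p₂/p₀ = q₁/q₀ hold on I. If ∂₁∂₂A_{f,p}(x,x) + ∂₁∂₂A_{g,q}(x,x) = 0 for all x ∈ I, then (p₁p₂)'/(p₁p₂) + f''/f' + (q₁q₂)'/(q₁q₂) + g''/g' = 0 on I. Consequently, there exists a nonzero constant δ such that p₁q₁ = p₂q₂ = √(δ/(f'g')) on I. -/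

import Mathlib

open Set

/-- The 2-variable generalized Bajraktarević mean
`A_{f,p}(x,y) = f⁻¹((p₁(x)f(x)+p₂(y)f(y))/(p₁(x)+p₂(y)))`,
where the inverse of `f` is taken on the interval `I`. -/
noncomputable def bajMean (I : Set ℝ) (f p₁ p₂ : ℝ → ℝ) (x y : ℝ) : ℝ :=
  Function.invFunOn f I ((p₁ x * f x + p₂ y * f y) / (p₁ x + p₂ y))

/-- Partial derivative with respect to the first variable. -/
noncomputable def pd1 (M : ℝ → ℝ → ℝ) (x y : ℝ) : ℝ := deriv (fun t => M t y) x

/-- Partial derivative with respect to the second variable. -/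
noncomputable def pd2 (M : ℝ → ℝ → ℝ) (x y : ℝ) : ℝ := deriv (fun t => M x t) y

open Function Filter Topology

lemma bajMean_mixed (I : Set ℝ) (hIopen : IsOpen I) (hIconn : I.OrdConnected)
    (f p₁ p₂ : ℝ → ℝ)
    (hf1 : ∀ x ∈ I, DifferentiableAt ℝ f x)
    (hf2 : ∀ x ∈ I, DifferentiableAt ℝ (deriv f) x)
    (hf' : ∀ x ∈ I, deriv f x ≠ 0)
    (hp : ∀ x ∈ I, 0 < p₁ x ∧ 0 < p₂ x)
    (hp1d : ∀ x ∈ I, DifferentiableAt ℝ p₁ x) (hp2d : ∀ x ∈ I, DifferentiableAt ℝ p₂ x)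
    {x : ℝ} (hx : x ∈ I) :
    pd1 (pd2 (bajMean I f p₁ p₂)) x x =
      -(((p₁ x * deriv p₂ x + p₂ x * deriv p₁ x)
          + p₁ x * p₂ x * (deriv (deriv f) x / deriv f x)) / (p₁ x + p₂ x) ^ 2) := by
  have hconv : Convex ℝ I := convex_iff_ordConnected.mpr hIconn
  have hp0 : ∀ t ∈ I, 0 < p₁ t + p₂ t := fun t ht => by
    have := hp t ht; linarith [this.1, this.2]
  have hfc : ContinuousOn f I := fun t ht => (hf1 t ht).continuousAt.continuousWithinAt
  -- injectivity of f on I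
  have hinj : InjOn f I := by
    have hsign : (∀ t ∈ I, 0 < deriv f t) ∨ (∀ t ∈ I, deriv f t < 0) := by
      by_contra hcon
      push_neg at hcon
      obtain ⟨⟨a, ha, ha'⟩, ⟨b, hb, hb'⟩⟩ := hcon
      have hJ : IsPreconnected (deriv f '' I) :=
        (hIconn.isPreconnected).image _ (fun t ht => (hf2 t ht).continuousAt.continuousWithinAt)
      have h0 : (0 : ℝ) ∈ deriv f '' I := by
        have := hJ.ordConnected.uIcc_subset (mem_image_of_mem _ ha) (mem_image_of_mem _ hb)
        apply this
        rw [Set.mem_uIcc]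
        exact Or.inl ⟨ha', hb'⟩
      obtain ⟨c, hc, hc0⟩ := h0
      exact hf' c hc hc0
    rcases hsign with hpos | hneg
    · exact (strictMonoOn_of_deriv_pos hconv hfc
        (fun t ht => hpos t (by rwa [hIopen.interior_eq] at ht))).injOn
    · exact (strictAntiOn_of_deriv_neg hconv hfc
        (fun t ht => hneg t (by rwa [hIopen.interior_eq] at ht))).injOn
  set φ : ℝ → ℝ := Function.invFunOn f I with hφ_def
  have hφf : ∀ t ∈ I, φ (f t) = t := fun t ht => hinj.leftInvOn_invFunOn ht
  have hstrict : ∀ t ∈ I, HasStrictDerivAt f (deriv f t) t := fun t ht =>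
    hasStrictDerivAt_of_hasDerivAt_of_continuousAt
      (eventually_of_mem (hIopen.mem_nhds ht) (fun s hs => (hf1 s hs).hasDerivAt))
      (hf2 t ht).continuousAt
  have hφd : ∀ t ∈ I, HasStrictDerivAt φ (deriv f t)⁻¹ (f t) := fun t ht =>
    (hstrict t ht).to_local_left_inverse (hf' t ht)
      (eventually_of_mem (hIopen.mem_nhds ht) (fun s hs => hφf s hs))
  have hSx : p₁ x + p₂ x ≠ 0 := ne_of_gt (hp0 x hx)
  -- values of F lie in the image of f
  have h2s : ∀ u ∈ I, ∀ v ∈ I, ∃ s ∈ I,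
      f s = (p₁ u * f u + p₂ v * f v) / (p₁ u + p₂ v) := by
    intro u hu v hv
    have hsub : Set.uIcc u v ⊆ I := hIconn.uIcc_subset hu hv
    have h0 : (0:ℝ) < p₁ u + p₂ v := by nlinarith [(hp u hu).1, (hp v hv).2]
    have hmem : (p₁ u * f u + p₂ v * f v) / (p₁ u + p₂ v) ∈ Set.uIcc (f u) (f v) := by
      rw [Set.mem_uIcc]
      rcases le_total (f u) (f v) with h | h
      · left
        constructor
        · rw [le_div_iff₀ h0]; nlinarith [(hp v hv).2]
        · rw [div_le_iff₀ h0]; nlinarith [(hp u hu).1]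
      · right
        constructor
        · rw [le_div_iff₀ h0]; nlinarith [(hp u hu).1]
        · rw [div_le_iff₀ h0]; nlinarith [(hp v hv).2]
    obtain ⟨s, hs, hfs⟩ := intermediate_value_uIcc (hfc.mono hsub) hmem
    exact ⟨s, hsub hs, hfs⟩
  have hφF : ∀ u ∈ I, ∀ v ∈ I,
      HasStrictDerivAt φ (deriv f (φ ((p₁ u * f u + p₂ v * f v) / (p₁ u + p₂ v))))⁻¹
        ((p₁ u * f u + p₂ v * f v) / (p₁ u + p₂ v)) := by
    intro u hu v hv
    obtain ⟨s, hs, hfs⟩ := h2s u hu v hv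
    rw [← hfs, hφf s hs]
    exact hφd s hs
  -- the first partial derivative in the second variable, as a function
  have hpd2 : ∀ u ∈ I, ∀ v ∈ I, pd2 (bajMean I f p₁ p₂) u v =
      (deriv f (φ ((p₁ u * f u + p₂ v * f v) / (p₁ u + p₂ v))))⁻¹ *
        (((deriv p₂ v * f v + p₂ v * deriv f v) * (p₁ u + p₂ v)
          - (p₁ u * f u + p₂ v * f v) * deriv p₂ v) / (p₁ u + p₂ v) ^ 2) := by
    intro u hu v hv
    have hden : p₁ u + p₂ v ≠ 0 := by nlinarith [(hp u hu).1, (hp v hv).2]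
    have hF : HasDerivAt (fun t => (p₁ u * f u + p₂ t * f t) / (p₁ u + p₂ t))
        (((deriv p₂ v * f v + p₂ v * deriv f v) * (p₁ u + p₂ v)
          - (p₁ u * f u + p₂ v * f v) * deriv p₂ v) / (p₁ u + p₂ v) ^ 2) v := by
      have hnum : HasDerivAt (fun t => p₁ u * f u + p₂ t * f t)
          (deriv p₂ v * f v + p₂ v * deriv f v) v :=
        ((hp2d v hv).hasDerivAt.mul (hf1 v hv).hasDerivAt).const_add _
      have hden' : HasDerivAt (fun t => p₁ u + p₂ t) (deriv p₂ v) v :=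
        (hp2d v hv).hasDerivAt.const_add _
      exact hnum.div hden' hden
    have hcomp := HasDerivAt.comp v ((hφF u hu v hv).hasDerivAt) hF
    unfold pd2 bajMean
    rw [← hφ_def]
    exact hcomp.deriv
  -- now differentiate in the first variable at the diagonal point x
  have hFxx : (p₁ x * f x + p₂ x * f x) / (p₁ x + p₂ x) = f x := by
    field_simp
  have hAxx : φ ((p₁ x * f x + p₂ x * f x) / (p₁ x + p₂ x)) = x := by
    rw [hFxx]; exact hφf x hx
  have hD1 : HasDerivAt (fun s => (p₁ s * f s + p₂ x * f x) / (p₁ s + p₂ x))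
      (((deriv p₁ x * f x + p₁ x * deriv f x) * (p₁ x + p₂ x)
        - (p₁ x * f x + p₂ x * f x) * deriv p₁ x) / (p₁ x + p₂ x) ^ 2) x := by
    have hnum : HasDerivAt (fun s => p₁ s * f s + p₂ x * f x)
        (deriv p₁ x * f x + p₁ x * deriv f x) x :=
      ((hp1d x hx).hasDerivAt.mul (hf1 x hx).hasDerivAt).add_const _
    have hd : HasDerivAt (fun s => p₁ s + p₂ x) (deriv p₁ x) x :=
      (hp1d x hx).hasDerivAt.add_const _
    exact hnum.div hd hSx
  have hA1 : HasDerivAt (fun s => φ ((p₁ s * f s + p₂ x * f x) / (p₁ s + p₂ x)))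
      ((deriv f x)⁻¹ * (((deriv p₁ x * f x + p₁ x * deriv f x) * (p₁ x + p₂ x)
        - (p₁ x * f x + p₂ x * f x) * deriv p₁ x) / (p₁ x + p₂ x) ^ 2)) x := by
    have hphi : HasDerivAt φ (deriv f x)⁻¹ ((p₁ x * f x + p₂ x * f x) / (p₁ x + p₂ x)) := by
      rw [hFxx]; exact (hφd x hx).hasDerivAt
    exact hphi.comp x hD1
  have hA2 : HasDerivAt (fun s => deriv f (φ ((p₁ s * f s + p₂ x * f x) / (p₁ s + p₂ x))))
      (deriv (deriv f) x * ((deriv f x)⁻¹ *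
        (((deriv p₁ x * f x + p₁ x * deriv f x) * (p₁ x + p₂ x)
          - (p₁ x * f x + p₂ x * f x) * deriv p₁ x) / (p₁ x + p₂ x) ^ 2))) x := by
    have hdf : HasDerivAt (deriv f) (deriv (deriv f) x)
        (φ ((p₁ x * f x + p₂ x * f x) / (p₁ x + p₂ x))) := by
      rw [hAxx]; exact (hf2 x hx).hasDerivAt
    exact hdf.comp x hA1
  have hA3 : HasDerivAt (fun s => (deriv f (φ ((p₁ s * f s + p₂ x * f x) / (p₁ s + p₂ x))))⁻¹)
      (-(deriv (deriv f) x * ((deriv f x)⁻¹ *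
        (((deriv p₁ x * f x + p₁ x * deriv f x) * (p₁ x + p₂ x)
          - (p₁ x * f x + p₂ x * f x) * deriv p₁ x) / (p₁ x + p₂ x) ^ 2)))
        / (deriv f x) ^ 2) x := by
    have h := hA2.inv (by rw [hAxx]; exact hf' x hx)
    rwa [hAxx] at h
  have hB : HasDerivAt (fun s =>
      ((deriv p₂ x * f x + p₂ x * deriv f x) * (p₁ s + p₂ x)
        - (p₁ s * f s + p₂ x * f x) * deriv p₂ x) / (p₁ s + p₂ x) ^ 2)
      ((((deriv p₂ x * f x + p₂ x * deriv f x) * deriv p₁ x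
        - (deriv p₁ x * f x + p₁ x * deriv f x) * deriv p₂ x) * (p₁ x + p₂ x) ^ 2
        - ((deriv p₂ x * f x + p₂ x * deriv f x) * (p₁ x + p₂ x)
            - (p₁ x * f x + p₂ x * f x) * deriv p₂ x)
          * ((2:ℝ) * (p₁ x + p₂ x) ^ 1 * deriv p₁ x)) / ((p₁ x + p₂ x) ^ 2) ^ 2) x := by
    have hnum : HasDerivAt (fun s =>
        (deriv p₂ x * f x + p₂ x * deriv f x) * (p₁ s + p₂ x)
          - (p₁ s * f s + p₂ x * f x) * deriv p₂ x)
        ((deriv p₂ x * f x + p₂ x * deriv f x) * deriv p₁ x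
          - (deriv p₁ x * f x + p₁ x * deriv f x) * deriv p₂ x) x :=
      (((hp1d x hx).hasDerivAt.add_const _).const_mul _).sub
        ((((hp1d x hx).hasDerivAt.mul (hf1 x hx).hasDerivAt).add_const _).mul_const _)
    have hden : HasDerivAt (fun s => (p₁ s + p₂ x) ^ 2)
        ((2:ℝ) * (p₁ x + p₂ x) ^ 1 * deriv p₁ x) x := by
      simpa using ((hp1d x hx).hasDerivAt.add_const (p₂ x)).fun_pow 2
    exact hnum.div hden (pow_ne_zero _ hSx)
  have heq : (fun s => pd2 (bajMean I f p₁ p₂) s x) =ᶠ[𝓝 x] (fun s =>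
      (deriv f (φ ((p₁ s * f s + p₂ x * f x) / (p₁ s + p₂ x))))⁻¹ *
        (((deriv p₂ x * f x + p₂ x * deriv f x) * (p₁ s + p₂ x)
          - (p₁ s * f s + p₂ x * f x) * deriv p₂ x) / (p₁ s + p₂ x) ^ 2)) :=
    eventually_of_mem (hIopen.mem_nhds hx) (fun s hs => hpd2 s hs x hx)
  show deriv (fun s => pd2 (bajMean I f p₁ p₂) s x) x = _
  rw [heq.deriv_eq]
  refine Eq.trans (hA3.mul hB).deriv ?_
  rw [hAxx]
  have hfx := hf' x hx
  field_simp
  ring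


theorem stmt10 (I : Set ℝ) (hIopen : IsOpen I) (hIne : I.Nonempty) (hIconn : I.OrdConnected)
    (f g p₁ p₂ q₁ q₂ : ℝ → ℝ)
    (hf1 : ∀ x ∈ I, DifferentiableAt ℝ f x)
    (hf2 : ∀ x ∈ I, DifferentiableAt ℝ (deriv f) x)
    (hf' : ∀ x ∈ I, deriv f x ≠ 0)
    (hg1 : ∀ x ∈ I, DifferentiableAt ℝ g x)
    (hg2 : ∀ x ∈ I, DifferentiableAt ℝ (deriv g) x)
    (hg' : ∀ x ∈ I, deriv g x ≠ 0)
    (hp : ∀ x ∈ I, 0 < p₁ x ∧ 0 < p₂ x)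
    (hq : ∀ x ∈ I, 0 < q₁ x ∧ 0 < q₂ x)
    (hp1d : ∀ x ∈ I, DifferentiableAt ℝ p₁ x) (hp2d : ∀ x ∈ I, DifferentiableAt ℝ p₂ x)
    (hq1d : ∀ x ∈ I, DifferentiableAt ℝ q₁ x) (hq2d : ∀ x ∈ I, DifferentiableAt ℝ q₂ x)
    (h1OC : ∀ x ∈ I, p₁ x / (p₁ x + p₂ x) = q₂ x / (q₁ x + q₂ x) ∧
      p₂ x / (p₁ x + p₂ x) = q₁ x / (q₁ x + q₂ x))
    (hsum : ∀ x ∈ I,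
      pd1 (pd2 (bajMean I f p₁ p₂)) x x + pd1 (pd2 (bajMean I g q₁ q₂)) x x = 0) :
    (∀ x ∈ I,
      deriv (fun t => p₁ t * p₂ t) x / (p₁ x * p₂ x) + deriv (deriv f) x / deriv f x +
      deriv (fun t => q₁ t * q₂ t) x / (q₁ x * q₂ x) + deriv (deriv g) x / deriv g x = 0) ∧
    (∃ δ : ℝ, δ ≠ 0 ∧ ∀ x ∈ I,
      p₁ x * q₁ x = Real.sqrt (δ / (deriv f x * deriv g x)) ∧
      p₂ x * q₂ x = Real.sqrt (δ / (deriv f x * deriv g x))) := by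
  have hconv : Convex ℝ I := convex_iff_ordConnected.mpr hIconn
  have part1 : ∀ x ∈ I,
      deriv (fun t => p₁ t * p₂ t) x / (p₁ x * p₂ x) + deriv (deriv f) x / deriv f x +
      deriv (fun t => q₁ t * q₂ t) x / (q₁ x * q₂ x) + deriv (deriv g) x / deriv g x = 0 := by
    intro x hx
    have mf := bajMean_mixed I hIopen hIconn f p₁ p₂ hf1 hf2 hf' hp hp1d hp2d hx
    have mg := bajMean_mixed I hIopen hIconn g q₁ q₂ hg1 hg2 hg' hq hq1d hq2d hx
    have hs := hsum x hx
    have hP1 := (hp x hx).1; have hP2 := (hp x hx).2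
    have hQ1 := (hq x hx).1; have hQ2 := (hq x hx).2
    have hp0 : (0:ℝ) < p₁ x + p₂ x := by linarith
    have hq0 : (0:ℝ) < q₁ x + q₂ x := by linarith
    have h1' : p₁ x * (q₁ x + q₂ x) = q₂ x * (p₁ x + p₂ x) :=
      (div_eq_div_iff hp0.ne' hq0.ne').mp (h1OC x hx).1
    have h2' : p₂ x * (q₁ x + q₂ x) = q₁ x * (p₁ x + p₂ x) :=
      (div_eq_div_iff hp0.ne' hq0.ne').mp (h1OC x hx).2
    have hw : p₁ x * p₂ x * (q₁ x + q₂ x)^2 = q₁ x * q₂ x * (p₁ x + p₂ x)^2 := by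
      linear_combination (p₂ x * (q₁ x + q₂ x)) * h1' + (q₂ x * (p₁ x + p₂ x)) * h2'
    have hwq : p₁ x * p₂ x / (p₁ x + p₂ x)^2 = q₁ x * q₂ x / (q₁ x + q₂ x)^2 :=
      (div_eq_div_iff (pow_ne_zero 2 hp0.ne') (pow_ne_zero 2 hq0.ne')).mpr hw
    have hfx := hf' x hx; have hgx := hg' x hx
    set Ef := (deriv p₁ x * p₂ x + p₁ x * deriv p₂ x) / (p₁ x * p₂ x)
      + deriv (deriv f) x / deriv f x with hEf
    set Eg := (deriv q₁ x * q₂ x + q₁ x * deriv q₂ x) / (q₁ x * q₂ x)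
      + deriv (deriv g) x / deriv g x with hEg
    have e1 : p₁ x * p₂ x / (p₁ x + p₂ x)^2 * Ef
        = -pd1 (pd2 (bajMean I f p₁ p₂)) x x := by
      rw [mf, hEf]; field_simp; ring
    have e2 : q₁ x * q₂ x / (q₁ x + q₂ x)^2 * Eg
        = -pd1 (pd2 (bajMean I g q₁ q₂)) x x := by
      rw [mg, hEg]; field_simp; ring
    have key : p₁ x * p₂ x / (p₁ x + p₂ x)^2 * (Ef + Eg) = 0 := by
      linear_combination e1 + e2 + Eg * hwq - hs
    have hwpos : (0:ℝ) < p₁ x * p₂ x / (p₁ x + p₂ x)^2 := by positivity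
    have hEfg : Ef + Eg = 0 := by
      rcases mul_eq_zero.mp key with h | h
      · exact absurd h hwpos.ne'
      · exact h
    rw [deriv_fun_mul (hp1d x hx) (hp2d x hx), deriv_fun_mul (hq1d x hx) (hq2d x hx)]
    rw [hEf, hEg] at hEfg
    linarith
  refine ⟨part1, ?_⟩
  obtain ⟨x₀, hx₀⟩ := hIne
  set h := fun t => p₁ t * p₂ t * q₁ t * q₂ t * deriv f t * deriv g t with hh
  have hder : ∀ t ∈ I, HasDerivAt h 0 t := by
    intro t ht
    have H := (((((hp1d t ht).hasDerivAt.mul (hp2d t ht).hasDerivAt).mul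
      (hq1d t ht).hasDerivAt).mul (hq2d t ht).hasDerivAt).mul
      (hf2 t ht).hasDerivAt).mul (hg2 t ht).hasDerivAt
    have E := part1 t ht
    rw [deriv_fun_mul (hp1d t ht) (hp2d t ht), deriv_fun_mul (hq1d t ht) (hq2d t ht)] at E
    have hP1 := (hp t ht).1; have hP2 := (hp t ht).2
    have hQ1 := (hq t ht).1; have hQ2 := (hq t ht).2
    have hft := hf' t ht; have hgt := hg' t ht
    have hP1' := hP1.ne'; have hP2' := hP2.ne'
    have hQ1' := hQ1.ne'; have hQ2' := hQ2.ne'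
    field_simp at E
    refine HasDerivAt.congr_deriv H ?_
    simp only [Pi.mul_apply]
    linear_combination E
  have hdiffOn : DifferentiableOn ℝ h I :=
    fun t ht => ((hder t ht).differentiableAt).differentiableWithinAt
  have hfd0 : ∀ t ∈ I, fderivWithin ℝ h I t = 0 := by
    intro t ht
    rw [fderivWithin_of_isOpen hIopen ht]
    have H2 : HasFDerivAt h (0 : ℝ →L[ℝ] ℝ) t := by
      have H3 := (hder t ht).hasFDerivAt
      rwa [ContinuousLinearMap.toSpanSingleton_zero] at H3
    exact H2.fderiv
  have hconst : ∀ x ∈ I, h x = h x₀ := fun x hx =>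
    hconv.is_const_of_fderivWithin_eq_zero hdiffOn hfd0 hx hx₀
  refine ⟨h x₀, ?_, ?_⟩
  · have hP1 := (hp x₀ hx₀).1; have hP2 := (hp x₀ hx₀).2
    have hQ1 := (hq x₀ hx₀).1; have hQ2 := (hq x₀ hx₀).2
    have hft := hf' x₀ hx₀; have hgt := hg' x₀ hx₀
    simp only [hh]
    exact mul_ne_zero (mul_ne_zero (mul_ne_zero (mul_ne_zero
      (mul_ne_zero hP1.ne' hP2.ne') hQ1.ne') hQ2.ne') hft) hgt
  · intro x hx
    have hδx : p₁ x * p₂ x * q₁ x * q₂ x * deriv f x * deriv g x = h x₀ := hconst x hx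
    have hP1 := (hp x hx).1; have hP2 := (hp x hx).2
    have hQ1 := (hq x hx).1; have hQ2 := (hq x hx).2
    have hfx := hf' x hx; have hgx := hg' x hx
    have hp0 : (0:ℝ) < p₁ x + p₂ x := by linarith
    have hq0 : (0:ℝ) < q₁ x + q₂ x := by linarith
    have h1' : p₁ x * (q₁ x + q₂ x) = q₂ x * (p₁ x + p₂ x) :=
      (div_eq_div_iff hp0.ne' hq0.ne').mp (h1OC x hx).1
    have h2' : p₂ x * (q₁ x + q₂ x) = q₁ x * (p₁ x + p₂ x) :=
      (div_eq_div_iff hp0.ne' hq0.ne').mp (h1OC x hx).2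
    have h3 : (p₁ x * q₁ x - p₂ x * q₂ x) * (q₁ x + q₂ x) = 0 := by
      linear_combination q₁ x * h1' - q₂ x * h2'
    have hpq : p₁ x * q₁ x = p₂ x * q₂ x := by
      rcases mul_eq_zero.mp h3 with h4 | h4
      · linarith [sub_eq_zero.mp h4]
      · exact absurd h4 hq0.ne'
    have hv : h x₀ / (deriv f x * deriv g x) = (p₁ x * q₁ x)^2 := by
      rw [← hδx]
      field_simp
      linear_combination -hpq
    constructor
    · rw [hv, Real.sqrt_sq (mul_pos hP1 hQ1).le]
    · rw [hv, Real.sqrt_sq (mul_pos hP1 hQ1).le]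
      exact hpq.symm
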